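/- Let (h, 𝔣) be a one step reduction of a pseudo-polynomial (f, 𝔣) with respect to G = {(g_i, 𝔤_i)}, and let I = Σ_i 𝔤_i[x]·g_i be the ideal of R[x] generated by G. Then (h, 𝔣) is again a pseudo-polynomial of R[x] (i.e., 𝔣h ⊆ R[x]), and 𝔣[x]·(f − h) ⊆ I. -/

import Mathlib

open MvPolynomial

attribute [local instance] MvPolynomial.algebraMvPolynomial

noncomputable def mdeg {σ : Type*} (m : MonomialOrder σ) {K : Type*} [CommSemiring K]
    (f : MvPolynomial σ K) : σ →₀ ℕ :=
  m.toSyn.symm (f.support.sup fun d => m.toSyn d)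

noncomputable def plc {σ : Type*} (m : MonomialOrder σ) {K : Type*} [CommSemiring K]
    (f : MvPolynomial σ K) : K :=
  f.coeff (mdeg m f)

/-- One step reduction of `(f, 𝔣)` to `(h, 𝔣)` with respect to the family of
pseudo-polynomials `(gᵢ, 𝔤ᵢ)`: there are `aᵢ ∈ 𝔤ᵢ 𝔣⁻¹`, supported on the set
`J = {i : LM(gᵢ) ∣ LM(f)}`, with `LC(f) = ∑ aᵢ LC(gᵢ)` and
`h = f - ∑ aᵢ x^{deg f - deg gᵢ} gᵢ`. -/
def OneStep {R : Type*} [CommRing R] [IsDomain R] [IsDedekindDomain R] {n l : ℕ}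
    (m : MonomialOrder (Fin n))
    (g : Fin l → MvPolynomial (Fin n) (FractionRing R))
    (𝔤 : Fin l → FractionalIdeal (nonZeroDivisors R) (FractionRing R))
    (𝔣 : FractionalIdeal (nonZeroDivisors R) (FractionRing R))
    (f h : MvPolynomial (Fin n) (FractionRing R)) : Prop :=
  ∃ a : Fin l → FractionRing R,
    (∀ i, a i ∈ 𝔤 i * 𝔣⁻¹) ∧
    (∀ i, a i ≠ 0 → ∃ γ, mdeg m f = mdeg m (g i) + γ) ∧
    plc m f = ∑ i, a i * plc m (g i) ∧
    h = f - ∑ i, (monomial (mdeg m f - mdeg m (g i)) (a i)) * g i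

theorem key_mul {R : Type*} [CommRing R] [IsDomain R] [IsDedekindDomain R]
    (𝔣 𝔤 : FractionalIdeal (nonZeroDivisors R) (FractionRing R)) (h𝔣 : 𝔣 ≠ 0)
    {c a : FractionRing R} (hc : c ∈ 𝔣) (ha : a ∈ 𝔤 * 𝔣⁻¹) : c * a ∈ 𝔤 := by
  have : c * a ∈ 𝔣 * (𝔤 * 𝔣⁻¹) := FractionalIdeal.mul_mem_mul hc ha
  rwa [mul_comm 𝔤, ← mul_assoc, mul_inv_cancel₀ h𝔣, one_mul] at this

theorem span_aux {R : Type*} [CommRing R] [IsDomain R] [IsDedekindDomain R] {n l : ℕ}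
    (g : Fin l → MvPolynomial (Fin n) (FractionRing R))
    (𝔤 : Fin l → FractionalIdeal (nonZeroDivisors R) (FractionRing R))
    (i : Fin l) (q : MvPolynomial (Fin n) (FractionRing R))
    (hq : ∀ d, q.coeff d ∈ 𝔤 i) :
    q * g i ∈ Submodule.span (MvPolynomial (Fin n) R)
      (⋃ j, {x : MvPolynomial (Fin n) (FractionRing R) |
        ∃ c ∈ 𝔤 j, x = C c * g j}) := by
  rw [q.as_sum, Finset.sum_mul]
  refine Submodule.sum_mem _ fun d _ => ?_
  have hx : C (q.coeff d) * g i ∈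
      (⋃ j, {x : MvPolynomial (Fin n) (FractionRing R) | ∃ c ∈ 𝔤 j, x = C c * g j}) := by
    exact Set.mem_iUnion.2 ⟨i, q.coeff d, hq d, rfl⟩
  have : monomial d (q.coeff d) * g i =
      (monomial d (1 : R) : MvPolynomial (Fin n) R) • (C (q.coeff d) * g i) := by
    rw [Algebra.smul_def, algebraMap_def, map_monomial, ← mul_assoc]
    rw [show (C (q.coeff d) : MvPolynomial (Fin n) (FractionRing R)) = monomial 0 (q.coeff d) from rfl,
      monomial_mul]
    simp
  rw [this]
  exact Submodule.smul_mem _ _ (Submodule.subset_span hx)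

theorem stmt7 {R : Type*} [CommRing R] [IsDomain R] [IsDedekindDomain R] {n l : ℕ}
    (m : MonomialOrder (Fin n))
    (f h : MvPolynomial (Fin n) (FractionRing R))
    (𝔣 : FractionalIdeal (nonZeroDivisors R) (FractionRing R))
    (hf : f ≠ 0) (h𝔣 : 𝔣 ≠ 0)
    (hpf : ∀ c ∈ 𝔣, ∀ d, c * f.coeff d ∈
      (1 : FractionalIdeal (nonZeroDivisors R) (FractionRing R)))
    (g : Fin l → MvPolynomial (Fin n) (FractionRing R))
    (𝔤 : Fin l → FractionalIdeal (nonZeroDivisors R) (FractionRing R))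
    (hg : ∀ i, g i ≠ 0) (h𝔤 : ∀ i, 𝔤 i ≠ 0)
    (hpg : ∀ i, ∀ c ∈ 𝔤 i, ∀ d, c * (g i).coeff d ∈
      (1 : FractionalIdeal (nonZeroDivisors R) (FractionRing R)))
    (hstep : OneStep m g 𝔤 𝔣 f h) :
    (∀ c ∈ 𝔣, ∀ d, c * h.coeff d ∈
        (1 : FractionalIdeal (nonZeroDivisors R) (FractionRing R)))
    ∧ (∀ p : MvPolynomial (Fin n) (FractionRing R), (∀ d, p.coeff d ∈ 𝔣) →
        p * (f - h) ∈ Submodule.span (MvPolynomial (Fin n) R)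
          (⋃ i, {x : MvPolynomial (Fin n) (FractionRing R) |
            ∃ c ∈ 𝔤 i, x = C c * g i})) := by
  obtain ⟨a, ha, -, -, hh⟩ := hstep
  constructor
  · intro c hc d
    rw [hh, coeff_sub, MvPolynomial.coeff_sum, mul_sub, Finset.mul_sum]
    rw [← FractionalIdeal.mem_coe]
    refine sub_mem (FractionalIdeal.mem_coe.2 (hpf c hc d)) (Submodule.sum_mem _ fun i _ => ?_)
    rw [FractionalIdeal.mem_coe]
    rw [coeff_monomial_mul']
    split_ifs with hle
    · rw [← mul_assoc]
      exact hpg i _ (key_mul 𝔣 (𝔤 i) h𝔣 hc (ha i)) _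
    · rw [mul_zero, ← FractionalIdeal.mem_coe]; exact zero_mem _
  · intro p hp
    have : f - h = ∑ i, (monomial (mdeg m f - mdeg m (g i)) (a i)) * g i := by
      rw [hh]; ring
    rw [this, Finset.mul_sum]
    refine Submodule.sum_mem _ fun i _ => ?_
    rw [← mul_assoc]
    refine span_aux g 𝔤 i _ fun d => ?_
    rw [coeff_mul_monomial']
    split_ifs with hle
    · exact key_mul 𝔣 (𝔤 i) h𝔣 (hp _) (ha i)
    · rw [← FractionalIdeal.mem_coe]; exact zero_mem _
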